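/- Assume μ is quasi-definite. Then the Christoffel–Darboux kernels have the reproducing property: for every l ≥ 0 and all nonzero v, y ∈ ℂ, k^{L,[l]}(v,y) = ∮_𝕋 k^{L,[l]}(v,z) dμ(z)/(iz) k^{L,[l]}(z,y) and k^{R,[l]}(y,v) = ∮_𝕋 k^{R,[l]}(y,z) dμ(z)/(iz) k^{R,[l]}(z,v), where in each integrand the integration variable z runs over 𝕋 and occupies the second slot of the left factor and the first slot of the right factor. -/

import Mathlib

noncomputable section

open scoped Matrix
open Finset

namespace MOLPUC

/-- `m × m` complex matrices. -/
abbrev Mm (m : ℕ) := Matrix (Fin m) (Fin m) ℂ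

/-- An `m × m` matrix measure on the unit circle `𝕋`, modelled entrywise by the
integration functionals `f ↦ ∫_𝕋 f dμ_{cd}`. -/
abbrev MatMeas (m : ℕ) := Fin m → Fin m → ((Circle → ℂ) →ₗ[ℂ] ℂ)

variable {m : ℕ}

/-- The matrix integral `∮_𝕋 f(z) dμ(z)/(iz) g(z)`, with `(a,b)` entry
`Σ_{c,d} ∫_𝕋 f_{ac}(z) g_{db}(z) (iz)⁻¹ dμ_{cd}(z)`. -/
def mInt (μ : MatMeas m) (f g : ℂ → Mm m) : Mm m :=
  Matrix.of fun a b => ∑ c, ∑ d,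
    μ c d (fun z => f (z : ℂ) a c * g (z : ℂ) d b / (Complex.I * (z : ℂ)))

/-- CMV exponents: `n_0 = 0`, `n_{2k-1} = -k`, `n_{2k} = k`. -/
def nexp (j : ℕ) : ℤ := if j % 2 = 1 then -(((j + 1) / 2 : ℕ) : ℤ) else ((j / 2 : ℕ) : ℤ)

/-- CMV ordered Laurent monomials `χ^{(j)}(z) = z^{n_j}`. -/
def chi (j : ℕ) (z : ℂ) : ℂ := z ^ nexp j

/-- The Laurent monomial `z^n` times the identity matrix. -/
def zmon (n : ℤ) : ℂ → Mm m := fun z => z ^ n • (1 : Mm m)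

/-- The moments `c_n = (1/2π) ∮_𝕋 z^{-n} dμ(z)/(iz)`. -/
def moment (μ : MatMeas m) (n : ℤ) : Mm m :=
  ((2 * Real.pi : ℝ) : ℂ)⁻¹ • mInt μ (zmon (-n)) (fun _ => (1 : Mm m))

/-- Blocks of the left CMV moment matrix: `(g^L)_{ij} = 2π c_{n_j - n_i}`. -/
def gL (μ : MatMeas m) (i j : ℕ) : Mm m :=
  ((2 * Real.pi : ℝ) : ℂ) • moment μ (nexp j - nexp i)

/-- Blocks of the right CMV moment matrix: `(g^R)_{ij} = 2π c_{n_i - n_j}`. -/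
def gR (μ : MatMeas m) (i j : ℕ) : Mm m :=
  ((2 * Real.pi : ℝ) : ℂ) • moment μ (nexp i - nexp j)

/-- The `ml × ml` leading principal truncation of a semi-infinite block matrix. -/
def trunc (g : ℕ → ℕ → Mm m) (l : ℕ) : Matrix (Fin l × Fin m) (Fin l × Fin m) ℂ :=
  Matrix.of fun p q => g p.1 q.1 p.2 q.2

/-- The `(i,j)`-th `m × m` block of the inverse of the truncated matrix. -/
def invBlk (g : ℕ → ℕ → Mm m) (l : ℕ) (i j : Fin l) : Mm m :=
  Matrix.of fun a b => (trunc g l)⁻¹ (i, a) (j, b)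

/-- Quasi-definiteness: all leading principal block truncations of both CMV moment
matrices are invertible. -/
def QuasiDefinite (μ : MatMeas m) : Prop :=
  ∀ l : ℕ, 1 ≤ l → IsUnit (trunc (gL μ) l) ∧ IsUnit (trunc (gR μ) l)

/-- The Schur complement `D^L_l`. -/
def DL (μ : MatMeas m) (l : ℕ) : Mm m :=
  gL μ l l - ∑ i : Fin l, ∑ j : Fin l, gL μ l i * invBlk (gL μ) l i j * gL μ j l

/-- The Schur complement `D^R_l`. -/
def DR (μ : MatMeas m) (l : ℕ) : Mm m :=
  gR μ l l - ∑ i : Fin l, ∑ j : Fin l, gR μ l i * invBlk (gR μ) l i j * gR μ j l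

/-- The quasi-norms `h^L_{2l} = D^L_{2l}`, `h^L_{2l+1} = D^R_{2l+1}`. -/
def hLn (μ : MatMeas m) (l : ℕ) : Mm m := if l % 2 = 0 then DL μ l else DR μ l

/-- The quasi-norms `h^R_{2l} = D^R_{2l}`, `h^R_{2l+1} = D^L_{2l+1}`. -/
def hRn (μ : MatMeas m) (l : ℕ) : Mm m := if l % 2 = 0 then DR μ l else DL μ l

/-- The CMV matrix Laurent polynomial `φ₁^{L,(l)}`. -/
def phiL (μ : MatMeas m) (l : ℕ) (z : ℂ) : Mm m :=
  chi l z • (1 : Mm m) -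
    ∑ i : Fin l, ∑ j : Fin l, chi j z • (gL μ l i * invBlk (gL μ) l i j)

/-- The CMV matrix Laurent polynomial `ψ^{L,(l)}`. -/
def psiL (μ : MatMeas m) (l : ℕ) (z : ℂ) : Mm m :=
  (chi l z⁻¹ • (1 : Mm m) -
    ∑ i : Fin l, ∑ j : Fin l, chi i z⁻¹ • (invBlk (gL μ) l i j * gL μ j l)) * (DL μ l)⁻¹

/-- The CMV matrix Laurent polynomial `φ₁^{R,(l)}`. -/
def phiR (μ : MatMeas m) (l : ℕ) (z : ℂ) : Mm m :=
  (chi l z • (1 : Mm m) -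
    ∑ i : Fin l, ∑ j : Fin l, chi i z • (invBlk (gR μ) l i j * gR μ j l)) * (DR μ l)⁻¹

/-- The CMV matrix Laurent polynomial `ψ^{R,(l)}`. -/
def psiR (μ : MatMeas m) (l : ℕ) (z : ℂ) : Mm m :=
  chi l z⁻¹ • (1 : Mm m) -
    ∑ i : Fin l, ∑ j : Fin l, chi j z⁻¹ • (gR μ l i * invBlk (gR μ) l i j)

/-- Evaluation of a matrix polynomial of degree `l` with coefficients `p`. -/
def pev (p : ℕ → Mm m) (l : ℕ) (z : ℂ) : Mm m := ∑ j ∈ Finset.range (l + 1), z ^ j • p j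

/-- The reversed polynomial `P*(z) = Σ_j (p_{l-j})† z^j`. -/
def pstar (p : ℕ → Mm m) (l : ℕ) (z : ℂ) : Mm m :=
  ∑ j ∈ Finset.range (l + 1), z ^ j • (p (l - j))ᴴ

/-- `p` is the coefficient family of a monic matrix polynomial of degree `l`. -/
def MonicDeg (p : ℕ → Mm m) (l : ℕ) : Prop := p l = 1 ∧ ∀ j, l < j → p j = 0

/-- `P l` is the coefficient family of the matrix Szegő polynomial `P^L_{1,l}`. -/
def IsSzL1 (μ : MatMeas m) (P : ℕ → ℕ → Mm m) : Prop :=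
  ∀ l, MonicDeg (P l) l ∧ ∀ j < l, mInt μ (pev (P l) l) (zmon (-(j : ℤ))) = 0

/-- `P l` is the coefficient family of the matrix Szegő polynomial `P^L_{2,l}`. -/
def IsSzL2 (μ : MatMeas m) (P : ℕ → ℕ → Mm m) : Prop :=
  ∀ l, MonicDeg (P l) l ∧
    ∀ j < l, mInt μ (zmon (j : ℤ)) (fun z => (pev (P l) l z)ᴴ) = 0

/-- `P l` is the coefficient family of the matrix Szegő polynomial `P^R_{1,l}`. -/
def IsSzR1 (μ : MatMeas m) (P : ℕ → ℕ → Mm m) : Prop :=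
  ∀ l, MonicDeg (P l) l ∧ ∀ j < l, mInt μ (zmon (-(j : ℤ))) (pev (P l) l) = 0

/-- `P l` is the coefficient family of the matrix Szegő polynomial `P^R_{2,l}`. -/
def IsSzR2 (μ : MatMeas m) (P : ℕ → ℕ → Mm m) : Prop :=
  ∀ l, MonicDeg (P l) l ∧
    ∀ j < l, mInt μ (fun z => (pev (P l) l z)ᴴ) (zmon (j : ℤ)) = 0

/-- The Verblunsky matrix of a matrix polynomial: its value at `0`. -/
def verb (p : ℕ → Mm m) (l : ℕ) : Mm m := pev p l 0

/-- The Christoffel–Darboux kernel `k^{L,[l]}`. -/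
def kL (μ : MatMeas m) (l : ℕ) (v u : ℂ) : Mm m :=
  ∑ j ∈ Finset.range l, psiL μ j v * phiL μ j u

/-- The Christoffel–Darboux kernel `k^{R,[l]}`. -/
def kR (μ : MatMeas m) (l : ℕ) (u v : ℂ) : Mm m :=
  ∑ j ∈ Finset.range l, phiR μ j u * psiR μ j v

/-- Pointwise multiplication by a fixed function, as a linear map. -/
def mulFun (h : Circle → ℂ) : (Circle → ℂ) →ₗ[ℂ] (Circle → ℂ) where
  toFun f := fun z => h z * f z
  map_add' f g := by funext z; simp [mul_add]
  map_smul' c f := by funext z; simp [Pi.smul_apply, smul_eq_mul]; ring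

/-- The Miwa-shifted matrix measure `dM^{L,±}_w[μ](z) = (I - w z^{±1}) dμ(z)`
for a diagonal matrix `w = diag(w_1, …, w_m)`; `e = ±1`. -/
def miwaL (w : Fin m → ℂ) (e : ℤ) (μ : MatMeas m) : MatMeas m :=
  fun c d => (μ c d).comp (mulFun fun z => 1 - w c * (z : ℂ) ^ e)

/-- The Miwa-shifted matrix measure `dM^{R,±}_w[μ](z) = dμ(z) (I - w z^{±1})`. -/
def miwaR (w : Fin m → ℂ) (e : ℤ) (μ : MatMeas m) : MatMeas m :=
  fun c d => (μ c d).comp (mulFun fun z => 1 - w d * (z : ℂ) ^ e)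

/-- The scalar Miwa-shifted matrix measure `dM^{±}_w[μ](z) = (1 - w z^{±1}) dμ(z)`. -/
def miwaS (w : ℂ) (e : ℤ) (μ : MatMeas m) : MatMeas m :=
  fun c d => (μ c d).comp (mulFun fun z => 1 - w * (z : ℂ) ^ e)

/-- The deformed matrix measure `dμ_t(z) = exp(t z^{-1}) dμ(z)`. -/
def expShift (t : ℝ) (μ : MatMeas m) : MatMeas m :=
  fun c d => (μ c d).comp (mulFun fun z => Complex.exp ((t : ℂ) * ((z : ℂ))⁻¹))

variable {m : ℕ}

lemma mInt_congr (μ : MatMeas m) {f f' g g' : ℂ → Mm m}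
    (hf : ∀ z : Circle, f (z:ℂ) = f' (z:ℂ)) (hg : ∀ z : Circle, g (z:ℂ) = g' (z:ℂ)) :
    mInt μ f g = mInt μ f' g' := by
  unfold mInt
  ext a b
  simp only [Matrix.of_apply]
  refine Finset.sum_congr rfl fun c _ => Finset.sum_congr rfl fun d _ => ?_
  exact congrArg (μ c d) (funext fun z => by rw [hf z, hg z])

lemma mInt_sum_left {ι : Type*} (μ : MatMeas m) (s : Finset ι) (F : ι → ℂ → Mm m) (g : ℂ → Mm m) :
    mInt μ (fun z => ∑ i ∈ s, F i z) g = ∑ i ∈ s, mInt μ (F i) g := by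
  ext a b
  simp only [mInt, Matrix.of_apply, Matrix.sum_apply]
  calc (∑ c, ∑ d, μ c d fun z : Circle =>
          (∑ i ∈ s, F i (z:ℂ) a c) * g (z:ℂ) d b / (Complex.I * (z:ℂ)))
      = ∑ c, ∑ d, ∑ i ∈ s,
          μ c d (fun z : Circle => F i (z:ℂ) a c * g (z:ℂ) d b / (Complex.I * (z:ℂ))) := by
        refine Finset.sum_congr rfl fun c _ => Finset.sum_congr rfl fun d _ => ?_
        have h : (fun z : Circle => (∑ i ∈ s, F i (z:ℂ) a c) * g (z:ℂ) d b / (Complex.I * (z:ℂ)))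
            = ∑ i ∈ s, fun z : Circle => F i (z:ℂ) a c * g (z:ℂ) d b / (Complex.I * (z:ℂ)) := by
          funext z
          simp [Matrix.sum_apply, Finset.sum_mul, Finset.sum_div]
        rw [h, map_sum]
    _ = ∑ c, ∑ i ∈ s, ∑ d,
          μ c d (fun z : Circle => F i (z:ℂ) a c * g (z:ℂ) d b / (Complex.I * (z:ℂ))) :=
        Finset.sum_congr rfl fun c _ => Finset.sum_comm
    _ = ∑ i ∈ s, ∑ c, ∑ d,
          μ c d (fun z : Circle => F i (z:ℂ) a c * g (z:ℂ) d b / (Complex.I * (z:ℂ))) :=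
        Finset.sum_comm

lemma mInt_sum_right {ι : Type*} (μ : MatMeas m) (s : Finset ι) (f : ℂ → Mm m) (G : ι → ℂ → Mm m) :
    mInt μ f (fun z => ∑ i ∈ s, G i z) = ∑ i ∈ s, mInt μ f (G i) := by
  ext a b
  simp only [mInt, Matrix.of_apply, Matrix.sum_apply]
  calc (∑ c, ∑ d, μ c d fun z : Circle =>
          f (z:ℂ) a c * (∑ i ∈ s, G i (z:ℂ) d b) / (Complex.I * (z:ℂ)))
      = ∑ c, ∑ d, ∑ i ∈ s,
          μ c d (fun z : Circle => f (z:ℂ) a c * G i (z:ℂ) d b / (Complex.I * (z:ℂ))) := by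
        refine Finset.sum_congr rfl fun c _ => Finset.sum_congr rfl fun d _ => ?_
        have h : (fun z : Circle => f (z:ℂ) a c * (∑ i ∈ s, G i (z:ℂ) d b) / (Complex.I * (z:ℂ)))
            = ∑ i ∈ s, fun z : Circle => f (z:ℂ) a c * G i (z:ℂ) d b / (Complex.I * (z:ℂ)) := by
          funext z
          simp [Matrix.sum_apply, Finset.mul_sum, Finset.sum_div]
        rw [h, map_sum]
    _ = ∑ c, ∑ i ∈ s, ∑ d,
          μ c d (fun z : Circle => f (z:ℂ) a c * G i (z:ℂ) d b / (Complex.I * (z:ℂ))) :=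
        Finset.sum_congr rfl fun c _ => Finset.sum_comm
    _ = ∑ i ∈ s, ∑ c, ∑ d,
          μ c d (fun z : Circle => f (z:ℂ) a c * G i (z:ℂ) d b / (Complex.I * (z:ℂ))) :=
        Finset.sum_comm

lemma mInt_sub_left (μ : MatMeas m) (f f' g : ℂ → Mm m) :
    mInt μ (fun z => f z - f' z) g = mInt μ f g - mInt μ f' g := by
  ext a b
  simp only [mInt, Matrix.of_apply, Matrix.sub_apply, ← Finset.sum_sub_distrib]
  refine Finset.sum_congr rfl fun c _ => Finset.sum_congr rfl fun d _ => ?_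
  rw [← map_sub]
  exact congrArg (μ c d) (funext fun z => by
    simp [Matrix.sub_apply, sub_mul, sub_div])

lemma mInt_sub_right (μ : MatMeas m) (f g g' : ℂ → Mm m) :
    mInt μ f (fun z => g z - g' z) = mInt μ f g - mInt μ f g' := by
  ext a b
  simp only [mInt, Matrix.of_apply, Matrix.sub_apply, ← Finset.sum_sub_distrib]
  refine Finset.sum_congr rfl fun c _ => Finset.sum_congr rfl fun d _ => ?_
  rw [← map_sub]
  exact congrArg (μ c d) (funext fun z => by
    simp [Matrix.sub_apply, mul_sub, sub_div])

lemma mInt_const_mul_left (μ : MatMeas m) (M : Mm m) (f g : ℂ → Mm m) :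
    mInt μ (fun z => M * f z) g = M * mInt μ f g := by
  ext a b
  simp only [mInt, Matrix.of_apply, Matrix.mul_apply]
  calc (∑ c, ∑ d, μ c d fun z : Circle =>
          (∑ e, M a e * f (z:ℂ) e c) * g (z:ℂ) d b / (Complex.I * (z:ℂ)))
      = ∑ c, ∑ d, ∑ e, M a e *
          μ c d (fun z : Circle => f (z:ℂ) e c * g (z:ℂ) d b / (Complex.I * (z:ℂ))) := by
        refine Finset.sum_congr rfl fun c _ => Finset.sum_congr rfl fun d _ => ?_
        have h : (fun z : Circle => (∑ e, M a e * f (z:ℂ) e c) * g (z:ℂ) d b / (Complex.I * (z:ℂ)))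
            = ∑ e, M a e • fun z : Circle => f (z:ℂ) e c * g (z:ℂ) d b / (Complex.I * (z:ℂ)) := by
          funext z
          simp [Finset.sum_mul, Finset.sum_div, mul_assoc, mul_div_assoc]
        rw [h, map_sum]
        simp
    _ = ∑ e, ∑ c, ∑ d, M a e *
          μ c d (fun z : Circle => f (z:ℂ) e c * g (z:ℂ) d b / (Complex.I * (z:ℂ))) := by
        rw [show (∑ c, ∑ d, ∑ e, M a e *
            μ c d (fun z : Circle => f (z:ℂ) e c * g (z:ℂ) d b / (Complex.I * (z:ℂ))))
            = ∑ c, ∑ e, ∑ d, M a e *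
            μ c d (fun z : Circle => f (z:ℂ) e c * g (z:ℂ) d b / (Complex.I * (z:ℂ))) from
          Finset.sum_congr rfl fun c _ => Finset.sum_comm]
        exact Finset.sum_comm
    _ = ∑ e, M a e * ∑ c, ∑ d,
          μ c d (fun z : Circle => f (z:ℂ) e c * g (z:ℂ) d b / (Complex.I * (z:ℂ))) := by
        simp [Finset.mul_sum]

lemma mInt_mul_const_right (μ : MatMeas m) (N : Mm m) (f g : ℂ → Mm m) :
    mInt μ f (fun z => g z * N) = mInt μ f g * N := by
  ext a b
  simp only [mInt, Matrix.of_apply, Matrix.mul_apply]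
  calc (∑ c, ∑ d, μ c d fun z : Circle =>
          f (z:ℂ) a c * (∑ e, g (z:ℂ) d e * N e b) / (Complex.I * (z:ℂ)))
      = ∑ c, ∑ d, ∑ e, N e b *
          μ c d (fun z : Circle => f (z:ℂ) a c * g (z:ℂ) d e / (Complex.I * (z:ℂ))) := by
        refine Finset.sum_congr rfl fun c _ => Finset.sum_congr rfl fun d _ => ?_
        have h : (fun z : Circle => f (z:ℂ) a c * (∑ e, g (z:ℂ) d e * N e b) / (Complex.I * (z:ℂ)))
            = ∑ e, N e b • fun z : Circle => f (z:ℂ) a c * g (z:ℂ) d e / (Complex.I * (z:ℂ)) := by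
          funext z
          simp only [Finset.mul_sum, Finset.sum_div, Finset.sum_apply, Pi.smul_apply,
            smul_eq_mul]
          exact Finset.sum_congr rfl fun e _ => by ring
        rw [h, map_sum]
        simp
    _ = ∑ e, ∑ c, ∑ d, N e b *
          μ c d (fun z : Circle => f (z:ℂ) a c * g (z:ℂ) d e / (Complex.I * (z:ℂ))) := by
        rw [show (∑ c, ∑ d, ∑ e, N e b *
            μ c d (fun z : Circle => f (z:ℂ) a c * g (z:ℂ) d e / (Complex.I * (z:ℂ))))
            = ∑ c, ∑ e, ∑ d, N e b *
            μ c d (fun z : Circle => f (z:ℂ) a c * g (z:ℂ) d e / (Complex.I * (z:ℂ))) from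
          Finset.sum_congr rfl fun c _ => Finset.sum_comm]
        exact Finset.sum_comm
    _ = ∑ e, (∑ c, ∑ d,
          μ c d (fun z : Circle => f (z:ℂ) a c * g (z:ℂ) d e / (Complex.I * (z:ℂ)))) * N e b := by
        refine Finset.sum_congr rfl fun e _ => ?_
        rw [Finset.sum_mul]
        refine Finset.sum_congr rfl fun c _ => ?_
        rw [Finset.sum_mul]
        exact Finset.sum_congr rfl fun d _ => mul_comm _ _

lemma mInt_smul_pair (μ : MatMeas m) (p q : ℂ → ℂ) (F G : Mm m) :
    mInt μ (fun z => p z • F) (fun z => q z • G)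
      = F * mInt μ (fun z => p z • (1 : Mm m)) (fun z => q z • (1 : Mm m)) * G := by
  have h1 : (fun z : ℂ => p z • F) = fun z => F * (p z • (1 : Mm m)) := by
    funext z; rw [mul_smul_comm, mul_one]
  have h2 : (fun z : ℂ => q z • G) = fun z => (q z • (1 : Mm m)) * G := by
    funext z; rw [smul_mul_assoc, one_mul]
  rw [h1, h2, mInt_mul_const_right, mInt_const_mul_left]

lemma mInt_scalar_congr (μ : MatMeas m) (p q p' q' : ℂ → ℂ)
    (h : ∀ z : Circle, p (z:ℂ) * q (z:ℂ) = p' (z:ℂ) * q' (z:ℂ)) :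
    mInt μ (fun z => p z • (1 : Mm m)) (fun z => q z • (1 : Mm m))
      = mInt μ (fun z => p' z • (1 : Mm m)) (fun z => q' z • (1 : Mm m)) := by
  unfold mInt
  ext a b
  simp only [Matrix.of_apply]
  refine Finset.sum_congr rfl fun c _ => Finset.sum_congr rfl fun d _ => ?_
  refine congrArg (μ c d) (funext fun z => ?_)
  simp only [Matrix.smul_apply, Matrix.one_apply, smul_eq_mul]
  have hz := h z
  calc p (z:ℂ) * (if a = c then (1:ℂ) else 0) * (q (z:ℂ) * if d = b then (1:ℂ) else 0)
        / (Complex.I * (z:ℂ))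
      = p (z:ℂ) * q (z:ℂ) * ((if a = c then (1:ℂ) else 0) * if d = b then (1:ℂ) else 0)
        / (Complex.I * (z:ℂ)) := by ring
    _ = p' (z:ℂ) * q' (z:ℂ) * ((if a = c then (1:ℂ) else 0) * if d = b then (1:ℂ) else 0)
        / (Complex.I * (z:ℂ)) := by rw [hz]
    _ = p' (z:ℂ) * (if a = c then (1:ℂ) else 0) * (q' (z:ℂ) * if d = b then (1:ℂ) else 0)
        / (Complex.I * (z:ℂ)) := by ring

lemma mInt_chiL (μ : MatMeas m) (a b : ℕ) :
    mInt μ (fun z => chi a z • (1 : Mm m)) (fun z => chi b z⁻¹ • (1 : Mm m)) = gL μ a b := by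
  have h2π : ((2 * Real.pi : ℝ) : ℂ) ≠ 0 := by
    simp [Real.pi_ne_zero]
  rw [gL, moment, smul_smul, mul_inv_cancel₀ h2π, one_smul]
  have h1 : (fun _ : ℂ => (1 : Mm m)) = fun z : ℂ => (1 : ℂ) • (1 : Mm m) := by
    funext z; rw [one_smul]
  rw [h1]
  unfold zmon
  refine (mInt_scalar_congr μ _ _ _ _ fun z => ?_).symm
  have hz : (z : ℂ) ≠ 0 := Circle.coe_ne_zero z
  rw [mul_one, chi, chi, inv_zpow, ← zpow_neg, ← zpow_add₀ hz, neg_sub]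
  ring_nf

lemma mInt_chiR (μ : MatMeas m) (a b : ℕ) :
    mInt μ (fun z => chi a z⁻¹ • (1 : Mm m)) (fun z => chi b z • (1 : Mm m)) = gR μ a b := by
  have h2π : ((2 * Real.pi : ℝ) : ℂ) ≠ 0 := by
    simp [Real.pi_ne_zero]
  rw [gR, moment, smul_smul, mul_inv_cancel₀ h2π, one_smul]
  have h1 : (fun _ : ℂ => (1 : Mm m)) = fun z : ℂ => (1 : ℂ) • (1 : Mm m) := by
    funext z; rw [one_smul]
  rw [h1]
  unfold zmon
  refine (mInt_scalar_congr μ _ _ _ _ fun z => ?_).symm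
  have hz : (z : ℂ) ≠ 0 := Circle.coe_ne_zero z
  rw [mul_one, chi, chi, inv_zpow, ← zpow_neg, ← zpow_add₀ hz]
  congr 1
  ring

lemma invBlk_mul_g (g : ℕ → ℕ → Mm m) {l : ℕ} (hU : IsUnit (trunc g l)) (i p : Fin l) :
    (∑ i' : Fin l, invBlk g l i i' * g i' p) = if i = p then (1 : Mm m) else 0 := by
  have h1 : (trunc g l)⁻¹ * trunc g l = 1 :=
    Matrix.nonsing_inv_mul _ ((Matrix.isUnit_iff_isUnit_det _).mp hU)
  ext a b
  have h2 := congrFun (congrFun h1 (i, a)) (p, b)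
  rw [Matrix.mul_apply, Fintype.sum_prod_type] at h2
  simp only [trunc, Matrix.of_apply, Matrix.one_apply, Prod.mk.injEq] at h2
  simp only [Matrix.sum_apply, Matrix.mul_apply, invBlk, trunc, Matrix.of_apply]
  rw [h2]
  by_cases hip : i = p
  · simp [hip, Matrix.one_apply]
  · simp [hip]

lemma g_mul_invBlk (g : ℕ → ℕ → Mm m) {l : ℕ} (hU : IsUnit (trunc g l)) (r q : Fin l) :
    (∑ p : Fin l, g r p * invBlk g l p q) = if r = q then (1 : Mm m) else 0 := by
  have h1 : trunc g l * (trunc g l)⁻¹ = 1 :=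
    Matrix.mul_nonsing_inv _ ((Matrix.isUnit_iff_isUnit_det _).mp hU)
  ext a b
  have h2 := congrFun (congrFun h1 (r, a)) (q, b)
  rw [Matrix.mul_apply, Fintype.sum_prod_type] at h2
  simp only [trunc, Matrix.of_apply, Matrix.one_apply, Prod.mk.injEq] at h2
  simp only [Matrix.sum_apply, Matrix.mul_apply, invBlk, trunc, Matrix.of_apply]
  rw [h2]
  by_cases hrq : r = q
  · simp [hrq, Matrix.one_apply]
  · simp [hrq]

/-- Generic CMV-type polynomial built from the moment blocks `g`. -/
def GPhi (g : ℕ → ℕ → Mm m) (α : ℕ → ℂ → ℂ) (j : ℕ) (z : ℂ) : Mm m :=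
  α j z • (1 : Mm m) - ∑ i : Fin j, ∑ i' : Fin j, α i' z • (g j i * invBlk g j i i')

/-- Generic dual CMV-type polynomial built from the moment blocks `g`. -/
def GPsi (g : ℕ → ℕ → Mm m) (β : ℕ → ℂ → ℂ) (k : ℕ) (z : ℂ) : Mm m :=
  β k z • (1 : Mm m) - ∑ p : Fin k, ∑ q : Fin k, β p z • (invBlk g k p q * g q k)

/-- Generic Schur complement. -/
def GD (g : ℕ → ℕ → Mm m) (l : ℕ) : Mm m :=
  g l l - ∑ i : Fin l, ∑ j : Fin l, g l i * invBlk g l i j * g j l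

lemma sum_swap4 {A A' B B' : Type*} [Fintype A] [Fintype A'] [Fintype B] [Fintype B']
    {M : Type*} [AddCommMonoid M] (u : A → A' → B → B' → M) :
    ∑ p : B, ∑ q : B', ∑ i : A, ∑ i' : A', u i i' p q
      = ∑ i : A, ∑ i' : A', ∑ p : B, ∑ q : B', u i i' p q := by
  calc ∑ p : B, ∑ q : B', ∑ i : A, ∑ i' : A', u i i' p q
      = ∑ p : B, ∑ i : A, ∑ q : B', ∑ i' : A', u i i' p q :=
        Finset.sum_congr rfl fun p _ => Finset.sum_comm
    _ = ∑ i : A, ∑ p : B, ∑ q : B', ∑ i' : A', u i i' p q := Finset.sum_comm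
    _ = ∑ i : A, ∑ p : B, ∑ i' : A', ∑ q : B', u i i' p q :=
        Finset.sum_congr rfl fun i _ => Finset.sum_congr rfl fun p _ => Finset.sum_comm
    _ = ∑ i : A, ∑ i' : A', ∑ p : B, ∑ q : B', u i i' p q :=
        Finset.sum_congr rfl fun i _ => Finset.sum_comm

lemma contract_right (g : ℕ → ℕ → Mm m) {k : ℕ} (hUk : IsUnit (trunc g k))
    (r : ℕ) (hr : r < k) :
    (∑ p : Fin k, ∑ q : Fin k, g r ↑p * (invBlk g k p q * g ↑q k)) = g r k := by
  rw [Finset.sum_comm]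
  have step : ∀ q : Fin k, (∑ p : Fin k, g r ↑p * (invBlk g k p q * g ↑q k))
      = (if (⟨r, hr⟩ : Fin k) = q then (1 : Mm m) else 0) * g ↑q k := by
    intro q
    have assoc : ∀ p : Fin k, g r ↑p * (invBlk g k p q * g ↑q k)
        = g r ↑p * invBlk g k p q * g ↑q k := fun p => (mul_assoc _ _ _).symm
    simp only [assoc, ← Finset.sum_mul]
    exact congrArg (· * g ↑q k) (g_mul_invBlk g hUk ⟨r, hr⟩ q)
  simp only [step]
  simp [ite_mul, Finset.sum_ite_eq]

lemma contract_left (g : ℕ → ℕ → Mm m) {j : ℕ} (hUj : IsUnit (trunc g j))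
    (r : ℕ) (hr : r < j) :
    (∑ i : Fin j, ∑ i' : Fin j, g j ↑i * invBlk g j i i' * g ↑i' r) = g j r := by
  have step : ∀ i : Fin j, (∑ i' : Fin j, g j ↑i * invBlk g j i i' * g ↑i' r)
      = g j ↑i * (if i = (⟨r, hr⟩ : Fin j) then (1 : Mm m) else 0) := by
    intro i
    have assoc : ∀ i' : Fin j, g j ↑i * invBlk g j i i' * g ↑i' r
        = g j ↑i * (invBlk g j i i' * g ↑i' r) := fun i' => mul_assoc _ _ _
    simp only [assoc, ← Finset.mul_sum]
    exact congrArg (g j ↑i * ·) (invBlk_mul_g g hUj i ⟨r, hr⟩)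
  simp only [step]
  simp [mul_ite, Finset.sum_ite_eq']

lemma generic_biorth (μ : MatMeas m) (g : ℕ → ℕ → Mm m) (α β : ℕ → ℂ → ℂ)
    (H : ∀ a b : ℕ, mInt μ (fun z => α a z • (1 : Mm m)) (fun z => β b z • (1 : Mm m)) = g a b)
    (hU : ∀ l : ℕ, 1 ≤ l → IsUnit (trunc g l)) (j k : ℕ) :
    mInt μ (GPhi g α j) (GPsi g β k) = if j = k then GD g j else 0 := by
  have key : ∀ (a b : ℕ) (F G : Mm m),
      mInt μ (fun z => α a z • F) (fun z => β b z • G) = F * g a b * G := by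
    intro a b F G
    rw [mInt_smul_pair, H]
  unfold GPhi GPsi
  simp only [mInt_sub_left, mInt_sub_right, mInt_sum_left, mInt_sum_right, key, one_mul, mul_one,
    Finset.sum_sub_distrib]
  rcases lt_trichotomy j k with hjk | hjk | hjk
  · -- j < k
    have hUk := hU k (by omega)
    have h4 : ∀ i i' : Fin j,
        (∑ p : Fin k, ∑ q : Fin k,
          g j ↑i * invBlk g j i i' * g ↑i' ↑p * (invBlk g k p q * g ↑q k))
        = g j ↑i * invBlk g j i i' * g ↑i' k := by
      intro i i'
      have assoc : ∀ (p q : Fin k),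
          g j ↑i * invBlk g j i i' * g ↑i' ↑p * (invBlk g k p q * g ↑q k)
          = g j ↑i * invBlk g j i i' * (g ↑i' ↑p * (invBlk g k p q * g ↑q k)) :=
        fun p q => mul_assoc _ _ _
      calc (∑ p : Fin k, ∑ q : Fin k,
              g j ↑i * invBlk g j i i' * g ↑i' ↑p * (invBlk g k p q * g ↑q k))
          = ∑ p : Fin k, g j ↑i * invBlk g j i i' *
              ∑ q : Fin k, g ↑i' ↑p * (invBlk g k p q * g ↑q k) := by
            refine Finset.sum_congr rfl fun p _ => ?_
            rw [Finset.mul_sum]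
            exact Finset.sum_congr rfl fun q _ => assoc p q
        _ = g j ↑i * invBlk g j i i' *
              ∑ p : Fin k, ∑ q : Fin k, g ↑i' ↑p * (invBlk g k p q * g ↑q k) :=
            (Finset.mul_sum _ _ _).symm
        _ = g j ↑i * invBlk g j i i' * g ↑i' k := by
            rw [contract_right g hUk ↑i' (lt_trans i'.2 hjk)]
    rw [sum_swap4]
    simp only [h4]
    rw [contract_right g hUk j hjk, if_neg (by omega)]
    exact sub_self _
  · -- j = k
    subst hjk
    by_cases hj0 : j = 0
    · subst hj0
      simp [GD]
    · have hUj := hU j (by omega)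
      have h4 : ∀ i i' : Fin j,
          (∑ p : Fin j, ∑ q : Fin j,
            g j ↑i * invBlk g j i i' * g ↑i' ↑p * (invBlk g j p q * g ↑q j))
          = g j ↑i * invBlk g j i i' * g ↑i' j := by
        intro i i'
        have assoc : ∀ (p q : Fin j),
            g j ↑i * invBlk g j i i' * g ↑i' ↑p * (invBlk g j p q * g ↑q j)
            = g j ↑i * invBlk g j i i' * (g ↑i' ↑p * (invBlk g j p q * g ↑q j)) :=
          fun p q => mul_assoc _ _ _
        calc (∑ p : Fin j, ∑ q : Fin j,
                g j ↑i * invBlk g j i i' * g ↑i' ↑p * (invBlk g j p q * g ↑q j))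
            = ∑ p : Fin j, g j ↑i * invBlk g j i i' *
                ∑ q : Fin j, g ↑i' ↑p * (invBlk g j p q * g ↑q j) := by
              refine Finset.sum_congr rfl fun p _ => ?_
              rw [Finset.mul_sum]
              exact Finset.sum_congr rfl fun q _ => assoc p q
          _ = g j ↑i * invBlk g j i i' *
                ∑ p : Fin j, ∑ q : Fin j, g ↑i' ↑p * (invBlk g j p q * g ↑q j) :=
              (Finset.mul_sum _ _ _).symm
          _ = g j ↑i * invBlk g j i i' * g ↑i' j := by
              rw [contract_right g hUj ↑i' i'.2]
      rw [sum_swap4]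
      simp only [h4]
      have hS2 : (∑ p : Fin j, ∑ q : Fin j, g j ↑p * (invBlk g j p q * g ↑q j))
          = ∑ p : Fin j, ∑ q : Fin j, g j ↑p * invBlk g j p q * g ↑q j :=
        Finset.sum_congr rfl fun p _ => Finset.sum_congr rfl fun q _ => (mul_assoc _ _ _).symm
      rw [hS2]
      simp only [sub_self, sub_zero, if_true]
      rfl
  · -- k < j
    have hUj := hU j (by omega)
    have h5 : ∀ p q : Fin k,
        (∑ i : Fin j, ∑ i' : Fin j,
          g j ↑i * invBlk g j i i' * g ↑i' ↑p * (invBlk g k p q * g ↑q k))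
        = g j ↑p * (invBlk g k p q * g ↑q k) := by
      intro p q
      calc (∑ i : Fin j, ∑ i' : Fin j,
              g j ↑i * invBlk g j i i' * g ↑i' ↑p * (invBlk g k p q * g ↑q k))
          = (∑ i : Fin j, ∑ i' : Fin j, g j ↑i * invBlk g j i i' * g ↑i' ↑p) *
              (invBlk g k p q * g ↑q k) := by
            rw [Finset.sum_mul]
            exact Finset.sum_congr rfl fun i _ => (Finset.sum_mul _ _ _).symm
        _ = g j ↑p * (invBlk g k p q * g ↑q k) := by
            rw [contract_left g hUj ↑p (lt_trans p.2 hjk)]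
    simp only [h5]
    rw [contract_left g hUj k hjk, if_neg (by omega)]
    simp
lemma GD_isUnit (g : ℕ → ℕ → Mm m) (hU : ∀ l : ℕ, 1 ≤ l → IsUnit (trunc g l)) (l : ℕ) :
    IsUnit (GD g l) := by
  classical
  -- the top-left corner
  have hA : IsUnit (trunc g l) := by
    rcases Nat.eq_zero_or_pos l with h0 | h1
    · subst h0
      rw [Matrix.isUnit_iff_isUnit_det, Matrix.det_isEmpty]
      exact isUnit_one
    · exact hU l h1
  letI : Invertible (trunc g l) :=
    (trunc g l).invertibleOfIsUnitDet ((Matrix.isUnit_iff_isUnit_det _).mp hA)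
  -- the equivalence splitting `Fin (l+1) × Fin m`
  let e : (Fin l × Fin m) ⊕ (Fin 1 × Fin m) ≃ Fin (l + 1) × Fin m :=
    (Equiv.sumProdDistrib (Fin l) (Fin 1) (Fin m)).symm.trans
      (Equiv.prodCongr finSumFinEquiv (Equiv.refl (Fin m)))
  -- the blocks
  let B : Matrix (Fin l × Fin m) (Fin 1 × Fin m) ℂ := Matrix.of fun p q => g ↑p.1 l p.2 q.2
  let C : Matrix (Fin 1 × Fin m) (Fin l × Fin m) ℂ := Matrix.of fun p q => g l ↑q.1 p.2 q.2
  let D : Matrix (Fin 1 × Fin m) (Fin 1 × Fin m) ℂ := Matrix.of fun p q => g l l p.2 q.2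
  have hblocks : (trunc g (l + 1)).submatrix e e = Matrix.fromBlocks (trunc g l) B C D := by
    ext i j
    rcases i with (⟨i, a⟩ | ⟨i, a⟩) <;> rcases j with (⟨j, b⟩ | ⟨j, b⟩) <;>
      simp [e, trunc, B, C, D, Matrix.fromBlocks, Equiv.sumProdDistrib, finSumFinEquiv,
        Fin.castAdd, Fin.natAdd, Fin.fin_one_eq_zero]
  letI : Invertible (trunc g (l + 1)) :=
    (trunc g (l + 1)).invertibleOfIsUnitDet
      ((Matrix.isUnit_iff_isUnit_det _).mp (hU (l + 1) (by omega)))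
  letI : Invertible ((trunc g (l + 1)).submatrix e e) :=
    Matrix.submatrixEquivInvertible (trunc g (l + 1)) e e
  letI : Invertible (Matrix.fromBlocks (trunc g l) B C D) := by
    rw [← hblocks]; infer_instance
  letI iS : Invertible (D - C * ⅟(trunc g l) * B) :=
    Matrix.invertibleOfFromBlocks₁₁Invertible (trunc g l) B C D
  -- identify the Schur complement with `GD g l`
  let e1 : Fin m ≃ Fin 1 × Fin m :=
    ⟨fun a => (0, a), fun p => p.2, fun a => rfl, by
      rintro ⟨p, a⟩
      simp [Subsingleton.elim (0 : Fin 1) p]⟩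
  have hGD : GD g l = (D - C * ⅟(trunc g l) * B).submatrix e1 e1 := by
    rw [Matrix.invOf_eq_nonsing_inv]
    ext a b
    have hC : (∑ i : Fin l, ∑ j : Fin l, g l ↑i * invBlk g l i j * g ↑j l) a b
        = (C * (trunc g l)⁻¹ * B) (e1 a) (e1 b) := by
      simp only [Matrix.mul_apply, Fintype.sum_prod_type, Matrix.sum_apply, Finset.sum_mul,
        invBlk, Matrix.of_apply, C, B, e1, Equiv.coe_fn_mk]
      conv_rhs => rw [sum_swap4]
      refine Finset.sum_congr rfl fun i _ => ?_
      calc (∑ j : Fin l, ∑ d : Fin m, ∑ c : Fin m,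
              g l ↑i a c * (trunc g l)⁻¹ (i, c) (j, d) * g ↑j l d b)
          = ∑ j : Fin l, ∑ c : Fin m, ∑ d : Fin m,
              g l ↑i a c * (trunc g l)⁻¹ (i, c) (j, d) * g ↑j l d b :=
            Finset.sum_congr rfl fun j _ => Finset.sum_comm
        _ = ∑ c : Fin m, ∑ j : Fin l, ∑ d : Fin m,
              g l ↑i a c * (trunc g l)⁻¹ (i, c) (j, d) * g ↑j l d b := Finset.sum_comm
    have hD : D (e1 a) (e1 b) = g l l a b := rfl
    simp only [Matrix.submatrix_apply, Matrix.sub_apply, GD, hD, hC]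
  rw [hGD]
  letI := Matrix.submatrixEquivInvertible (D - C * ⅟(trunc g l) * B) e1 e1
  exact isUnit_of_invertible _
lemma biorthL (μ : MatMeas m) (hμ : QuasiDefinite μ) (j k : ℕ) :
    mInt μ (phiL μ j) (psiL μ k) = if j = k then (1 : Mm m) else 0 := by
  have hUL : ∀ l : ℕ, 1 ≤ l → IsUnit (trunc (gL μ) l) := fun l hl => (hμ l hl).1
  have h1 : psiL μ k = fun z => GPsi (gL μ) (fun b w => chi b w⁻¹) k z * (DL μ k)⁻¹ := rfl
  have h2 : phiL μ j = GPhi (gL μ) chi j := rfl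
  rw [h1, mInt_mul_const_right, h2,
    generic_biorth μ (gL μ) chi (fun b w => chi b w⁻¹) (mInt_chiL μ) hUL j k]
  by_cases hjk : j = k
  · subst hjk
    rw [if_pos rfl, if_pos rfl]
    have hD : IsUnit (GD (gL μ) j) := GD_isUnit (gL μ) hUL j
    have : DL μ j = GD (gL μ) j := rfl
    rw [this]
    exact Matrix.mul_nonsing_inv _ ((Matrix.isUnit_iff_isUnit_det _).mp hD)
  · rw [if_neg hjk, if_neg hjk, Matrix.zero_mul]

lemma biorthR (μ : MatMeas m) (hμ : QuasiDefinite μ) (j k : ℕ) :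
    mInt μ (psiR μ j) (phiR μ k) = if j = k then (1 : Mm m) else 0 := by
  have hUR : ∀ l : ℕ, 1 ≤ l → IsUnit (trunc (gR μ) l) := fun l hl => (hμ l hl).2
  have h1 : phiR μ k = fun z => GPsi (gR μ) chi k z * (DR μ k)⁻¹ := rfl
  have h2 : psiR μ j = GPhi (gR μ) (fun a w => chi a w⁻¹) j := rfl
  rw [h1, mInt_mul_const_right, h2,
    generic_biorth μ (gR μ) (fun a w => chi a w⁻¹) chi (mInt_chiR μ) hUR j k]
  by_cases hjk : j = k
  · subst hjk
    rw [if_pos rfl, if_pos rfl]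
    have hD : IsUnit (GD (gR μ) j) := GD_isUnit (gR μ) hUR j
    have : DR μ j = GD (gR μ) j := rfl
    rw [this]
    exact Matrix.mul_nonsing_inv _ ((Matrix.isUnit_iff_isUnit_det _).mp hD)
  · rw [if_neg hjk, if_neg hjk, Matrix.zero_mul]

end MOLPUC

open MOLPUC in
/-- the reproducing property of the Christoffel–Darboux kernels. -/
theorem Christoffel_Darboux_reproducing_property
    (m : ℕ) (hm : 1 ≤ m) (μ : MatMeas m) (hμ : QuasiDefinite μ) :
    ∀ l : ℕ, ∀ v y : ℂ, v ≠ 0 → y ≠ 0 →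
      kL μ l v y = mInt μ (fun z => kL μ l v z) (fun z => kL μ l z y) ∧
      kR μ l y v = mInt μ (fun z => kR μ l y z) (fun z => kR μ l z v) := by
  intro l v y hv hy
  constructor
  · symm
    have e1 : (fun z : ℂ => kL μ l v z)
        = fun z => ∑ j ∈ Finset.range l, psiL μ j v * phiL μ j z := rfl
    have e2 : (fun z : ℂ => kL μ l z y)
        = fun z => ∑ k ∈ Finset.range l, psiL μ k z * phiL μ k y := rfl
    rw [e1, e2, mInt_sum_left, kL]
    refine Finset.sum_congr rfl fun j hj => ?_
    rw [mInt_sum_right]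
    have e3 : ∀ k : ℕ, mInt μ (fun z => psiL μ j v * phiL μ j z)
          (fun z => psiL μ k z * phiL μ k y)
        = psiL μ j v * (if j = k then (1 : Mm m) else 0) * phiL μ k y := by
      intro k
      rw [mInt_mul_const_right, mInt_const_mul_left, biorthL μ hμ j k]
    simp only [e3, mul_ite, ite_mul, mul_one, mul_zero, zero_mul]
    rw [Finset.sum_ite_eq, if_pos hj]
  · symm
    have e1 : (fun z : ℂ => kR μ l y z)
        = fun z => ∑ j ∈ Finset.range l, phiR μ j y * psiR μ j z := rfl
    have e2 : (fun z : ℂ => kR μ l z v)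
        = fun z => ∑ k ∈ Finset.range l, phiR μ k z * psiR μ k v := rfl
    rw [e1, e2, mInt_sum_left, kR]
    refine Finset.sum_congr rfl fun j hj => ?_
    rw [mInt_sum_right]
    have e3 : ∀ k : ℕ, mInt μ (fun z => phiR μ j y * psiR μ j z)
          (fun z => phiR μ k z * psiR μ k v)
        = phiR μ j y * (if j = k then (1 : Mm m) else 0) * psiR μ k v := by
      intro k
      rw [mInt_mul_const_right, mInt_const_mul_left, biorthR μ hμ j k]
    simp only [e3, mul_ite, ite_mul, mul_one, mul_zero, zero_mul]
    rw [Finset.sum_ite_eq, if_pos hj]
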